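/- Under the homogeneous DPP difference system with the stated regularity, boundary-condition encodings (H1)–(H2), and energy E(t), the derivative of the energy satisfies, for every t ∈ [0,T]: E′(t) = − ∫_Ω μ (K₁⁻¹(x) w₁(x,t))·w₁(x,t) dx − ∫_Ω μ (K₂⁻¹(x) w₂(x,t))·w₂(x,t) dx − ∫_Ω (β/μ) (q₁(x,t) − q₂(x,t))² dx. -/

import Mathlib

open Set MeasureTheory Matrix

/-- Divergence associated with a (spatial) Jacobian, i.e. the trace of the Fréchet
derivative of a vector field on ℝ³. -/
noncomputable def divOf (J : (Fin 3 → ℝ) →L[ℝ] (Fin 3 → ℝ)) : ℝ :=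
  ∑ j : Fin 3, J (Pi.single j 1) j

/-- The continuous linear map `v ↦ g · v` associated with a gradient vector `g`;
`HasFDerivAt q (gradCLM g) x` says `g` is the spatial gradient of `q` at `x`. -/
noncomputable def gradCLM (g : Fin 3 → ℝ) : (Fin 3 → ℝ) →L[ℝ] ℝ :=
  ∑ j : Fin 3, g j • (ContinuousLinearMap.proj j : (Fin 3 → ℝ) →L[ℝ] ℝ)

/-- The homogeneous double porosity/permeability (DPP) difference system on a bounded open
domain `Ω ⊆ ℝ³` and time interval `[0,T]`, together with all the regularity assumptions and
the boundary-condition encodings (H1)–(H2) described in the paper.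

Fields `w₁, w₂` (velocity differences) and `q₁, q₂` (pressure differences) satisfy
`(γ/φᵢ) ∂wᵢ/∂t + μ Kᵢ⁻¹ wᵢ + ∇qᵢ = 0`, `div w₁ = −(β/μ)(q₁−q₂)`, `div w₂ = +(β/μ)(q₁−q₂)`.
The time derivatives `dwᵢ, dqᵢ`, the spatial gradients `gqᵢ`, and the spatial Jacobians
`Jwᵢ, Jdwᵢ` (whose traces are the divergences of `wᵢ` and of `∂wᵢ/∂t`) are carried as data,
tied to the fields by `HasDerivWithinAt`/`HasFDerivAt` hypotheses. The hypothesis `leibniz`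
expresses that differentiation in `t` under the integral over `Ω` is valid (for continuous
bounded integrands with continuous bounded time derivatives). -/
structure DPP where
  Ω : Set (Fin 3 → ℝ)
  hΩopen : IsOpen Ω
  hΩbdd : Bornology.IsBounded Ω
  T : ℝ
  hT : 0 < T
  γ : ℝ
  μ : ℝ
  β : ℝ
  hγ : 0 < γ
  hμ : 0 < μ
  hβ : 0 < β
  φ₁ : (Fin 3 → ℝ) → ℝ
  φ₂ : (Fin 3 → ℝ) → ℝ
  hφ₁pos : ∀ x ∈ Ω, 0 < φ₁ x
  hφ₂pos : ∀ x ∈ Ω, 0 < φ₂ x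
  hφ₁cont : ContinuousOn φ₁ Ω
  hφ₂cont : ContinuousOn φ₂ Ω
  hφ₁bdd : ∃ c > (0:ℝ), ∃ C : ℝ, ∀ x ∈ Ω, c ≤ φ₁ x ∧ φ₁ x ≤ C
  hφ₂bdd : ∃ c > (0:ℝ), ∃ C : ℝ, ∀ x ∈ Ω, c ≤ φ₂ x ∧ φ₂ x ≤ C
  K₁ : (Fin 3 → ℝ) → Matrix (Fin 3) (Fin 3) ℝ
  K₂ : (Fin 3 → ℝ) → Matrix (Fin 3) (Fin 3) ℝ
  hK₁symm : ∀ x ∈ Ω, (K₁ x).IsSymm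
  hK₂symm : ∀ x ∈ Ω, (K₂ x).IsSymm
  hK₁pd : ∀ x ∈ Ω, (K₁ x).PosDef
  hK₂pd : ∀ x ∈ Ω, (K₂ x).PosDef
  hK₁invcont : ∀ i j, ContinuousOn (fun x => (K₁ x)⁻¹ i j) Ω
  hK₂invcont : ∀ i j, ContinuousOn (fun x => (K₂ x)⁻¹ i j) Ω
  hK₁invbdd : ∃ C : ℝ, ∀ x ∈ Ω, ∀ i j, |(K₁ x)⁻¹ i j| ≤ C
  hK₂invbdd : ∃ C : ℝ, ∀ x ∈ Ω, ∀ i j, |(K₂ x)⁻¹ i j| ≤ C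
  -- the fields of the difference system
  w₁ : (Fin 3 → ℝ) → ℝ → (Fin 3 → ℝ)
  w₂ : (Fin 3 → ℝ) → ℝ → (Fin 3 → ℝ)
  q₁ : (Fin 3 → ℝ) → ℝ → ℝ
  q₂ : (Fin 3 → ℝ) → ℝ → ℝ
  -- derivative data: time derivatives, spatial gradients, spatial Jacobians
  dw₁ : (Fin 3 → ℝ) → ℝ → (Fin 3 → ℝ)
  dw₂ : (Fin 3 → ℝ) → ℝ → (Fin 3 → ℝ)
  dq₁ : (Fin 3 → ℝ) → ℝ → ℝ
  dq₂ : (Fin 3 → ℝ) → ℝ → ℝ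
  gq₁ : (Fin 3 → ℝ) → ℝ → (Fin 3 → ℝ)
  gq₂ : (Fin 3 → ℝ) → ℝ → (Fin 3 → ℝ)
  Jw₁ : (Fin 3 → ℝ) → ℝ → ((Fin 3 → ℝ) →L[ℝ] (Fin 3 → ℝ))
  Jw₂ : (Fin 3 → ℝ) → ℝ → ((Fin 3 → ℝ) →L[ℝ] (Fin 3 → ℝ))
  Jdw₁ : (Fin 3 → ℝ) → ℝ → ((Fin 3 → ℝ) →L[ℝ] (Fin 3 → ℝ))
  Jdw₂ : (Fin 3 → ℝ) → ℝ → ((Fin 3 → ℝ) →L[ℝ] (Fin 3 → ℝ))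
  -- C¹ regularity in time: the data are the actual derivatives
  hdw₁ : ∀ x ∈ Ω, ∀ t ∈ Icc (0:ℝ) T, HasDerivWithinAt (w₁ x) (dw₁ x t) (Icc (0:ℝ) T) t
  hdw₂ : ∀ x ∈ Ω, ∀ t ∈ Icc (0:ℝ) T, HasDerivWithinAt (w₂ x) (dw₂ x t) (Icc (0:ℝ) T) t
  hdq₁ : ∀ x ∈ Ω, ∀ t ∈ Icc (0:ℝ) T, HasDerivWithinAt (q₁ x) (dq₁ x t) (Icc (0:ℝ) T) t
  hdq₂ : ∀ x ∈ Ω, ∀ t ∈ Icc (0:ℝ) T, HasDerivWithinAt (q₂ x) (dq₂ x t) (Icc (0:ℝ) T) t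
  -- C¹ regularity in space: gradients and Jacobians
  hgq₁ : ∀ t ∈ Icc (0:ℝ) T, ∀ x ∈ Ω, HasFDerivAt (fun y => q₁ y t) (gradCLM (gq₁ x t)) x
  hgq₂ : ∀ t ∈ Icc (0:ℝ) T, ∀ x ∈ Ω, HasFDerivAt (fun y => q₂ y t) (gradCLM (gq₂ x t)) x
  hJw₁ : ∀ t ∈ Icc (0:ℝ) T, ∀ x ∈ Ω, HasFDerivAt (fun y => w₁ y t) (Jw₁ x t) x
  hJw₂ : ∀ t ∈ Icc (0:ℝ) T, ∀ x ∈ Ω, HasFDerivAt (fun y => w₂ y t) (Jw₂ x t) x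
  hJdw₁ : ∀ t ∈ Icc (0:ℝ) T, ∀ x ∈ Ω, HasFDerivAt (fun y => dw₁ y t) (Jdw₁ x t) x
  hJdw₂ : ∀ t ∈ Icc (0:ℝ) T, ∀ x ∈ Ω, HasFDerivAt (fun y => dw₂ y t) (Jdw₂ x t) x
  -- `div (∂wᵢ/∂t) = ∂(div wᵢ)/∂t`
  hdivcomm₁ : ∀ x ∈ Ω, ∀ t ∈ Icc (0:ℝ) T,
    HasDerivWithinAt (fun s => divOf (Jw₁ x s)) (divOf (Jdw₁ x t)) (Icc (0:ℝ) T) t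
  hdivcomm₂ : ∀ x ∈ Ω, ∀ t ∈ Icc (0:ℝ) T,
    HasDerivWithinAt (fun s => divOf (Jw₂ x s)) (divOf (Jdw₂ x t)) (Icc (0:ℝ) T) t
  -- joint continuity of the fields and of their appearing first derivatives
  hw₁cont : ContinuousOn (fun p : (Fin 3 → ℝ) × ℝ => w₁ p.1 p.2) (Ω ×ˢ Icc (0:ℝ) T)
  hw₂cont : ContinuousOn (fun p : (Fin 3 → ℝ) × ℝ => w₂ p.1 p.2) (Ω ×ˢ Icc (0:ℝ) T)
  hq₁cont : ContinuousOn (fun p : (Fin 3 → ℝ) × ℝ => q₁ p.1 p.2) (Ω ×ˢ Icc (0:ℝ) T)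
  hq₂cont : ContinuousOn (fun p : (Fin 3 → ℝ) × ℝ => q₂ p.1 p.2) (Ω ×ˢ Icc (0:ℝ) T)
  hdw₁cont : ContinuousOn (fun p : (Fin 3 → ℝ) × ℝ => dw₁ p.1 p.2) (Ω ×ˢ Icc (0:ℝ) T)
  hdw₂cont : ContinuousOn (fun p : (Fin 3 → ℝ) × ℝ => dw₂ p.1 p.2) (Ω ×ˢ Icc (0:ℝ) T)
  hdq₁cont : ContinuousOn (fun p : (Fin 3 → ℝ) × ℝ => dq₁ p.1 p.2) (Ω ×ˢ Icc (0:ℝ) T)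
  hdq₂cont : ContinuousOn (fun p : (Fin 3 → ℝ) × ℝ => dq₂ p.1 p.2) (Ω ×ˢ Icc (0:ℝ) T)
  hgq₁cont : ContinuousOn (fun p : (Fin 3 → ℝ) × ℝ => gq₁ p.1 p.2) (Ω ×ˢ Icc (0:ℝ) T)
  hgq₂cont : ContinuousOn (fun p : (Fin 3 → ℝ) × ℝ => gq₂ p.1 p.2) (Ω ×ˢ Icc (0:ℝ) T)
  hdivw₁cont : ContinuousOn (fun p : (Fin 3 → ℝ) × ℝ => divOf (Jw₁ p.1 p.2)) (Ω ×ˢ Icc (0:ℝ) T)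
  hdivw₂cont : ContinuousOn (fun p : (Fin 3 → ℝ) × ℝ => divOf (Jw₂ p.1 p.2)) (Ω ×ˢ Icc (0:ℝ) T)
  hdivdw₁cont : ContinuousOn (fun p : (Fin 3 → ℝ) × ℝ => divOf (Jdw₁ p.1 p.2)) (Ω ×ˢ Icc (0:ℝ) T)
  hdivdw₂cont : ContinuousOn (fun p : (Fin 3 → ℝ) × ℝ => divOf (Jdw₂ p.1 p.2)) (Ω ×ˢ Icc (0:ℝ) T)
  -- boundedness of the fields and of their appearing first derivatives
  hw₁bdd : ∃ C : ℝ, ∀ x ∈ Ω, ∀ t ∈ Icc (0:ℝ) T, ‖w₁ x t‖ ≤ C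
  hw₂bdd : ∃ C : ℝ, ∀ x ∈ Ω, ∀ t ∈ Icc (0:ℝ) T, ‖w₂ x t‖ ≤ C
  hq₁bdd : ∃ C : ℝ, ∀ x ∈ Ω, ∀ t ∈ Icc (0:ℝ) T, |q₁ x t| ≤ C
  hq₂bdd : ∃ C : ℝ, ∀ x ∈ Ω, ∀ t ∈ Icc (0:ℝ) T, |q₂ x t| ≤ C
  hdw₁bdd : ∃ C : ℝ, ∀ x ∈ Ω, ∀ t ∈ Icc (0:ℝ) T, ‖dw₁ x t‖ ≤ C
  hdw₂bdd : ∃ C : ℝ, ∀ x ∈ Ω, ∀ t ∈ Icc (0:ℝ) T, ‖dw₂ x t‖ ≤ C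
  hdq₁bdd : ∃ C : ℝ, ∀ x ∈ Ω, ∀ t ∈ Icc (0:ℝ) T, |dq₁ x t| ≤ C
  hdq₂bdd : ∃ C : ℝ, ∀ x ∈ Ω, ∀ t ∈ Icc (0:ℝ) T, |dq₂ x t| ≤ C
  hgq₁bdd : ∃ C : ℝ, ∀ x ∈ Ω, ∀ t ∈ Icc (0:ℝ) T, ‖gq₁ x t‖ ≤ C
  hgq₂bdd : ∃ C : ℝ, ∀ x ∈ Ω, ∀ t ∈ Icc (0:ℝ) T, ‖gq₂ x t‖ ≤ C
  hdivw₁bdd : ∃ C : ℝ, ∀ x ∈ Ω, ∀ t ∈ Icc (0:ℝ) T, |divOf (Jw₁ x t)| ≤ C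
  hdivw₂bdd : ∃ C : ℝ, ∀ x ∈ Ω, ∀ t ∈ Icc (0:ℝ) T, |divOf (Jw₂ x t)| ≤ C
  hdivdw₁bdd : ∃ C : ℝ, ∀ x ∈ Ω, ∀ t ∈ Icc (0:ℝ) T, |divOf (Jdw₁ x t)| ≤ C
  hdivdw₂bdd : ∃ C : ℝ, ∀ x ∈ Ω, ∀ t ∈ Icc (0:ℝ) T, |divOf (Jdw₂ x t)| ≤ C
  -- the homogeneous DPP difference system
  pde₁ : ∀ x ∈ Ω, ∀ t ∈ Icc (0:ℝ) T,
    (γ / φ₁ x) • dw₁ x t + μ • ((K₁ x)⁻¹ *ᵥ w₁ x t) + gq₁ x t = 0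
  pde₂ : ∀ x ∈ Ω, ∀ t ∈ Icc (0:ℝ) T,
    (γ / φ₂ x) • dw₂ x t + μ • ((K₂ x)⁻¹ *ᵥ w₂ x t) + gq₂ x t = 0
  mass₁ : ∀ x ∈ Ω, ∀ t ∈ Icc (0:ℝ) T, divOf (Jw₁ x t) = -(β / μ) * (q₁ x t - q₂ x t)
  mass₂ : ∀ x ∈ Ω, ∀ t ∈ Icc (0:ℝ) T, divOf (Jw₂ x t) = (β / μ) * (q₁ x t - q₂ x t)
  -- boundary-condition encodings (H1)–(H2)
  H1₁ : ∀ t ∈ Icc (0:ℝ) T,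
    (∫ x in Ω, (w₁ x t ⬝ᵥ gq₁ x t + q₁ x t * divOf (Jw₁ x t))) = 0
  H1₂ : ∀ t ∈ Icc (0:ℝ) T,
    (∫ x in Ω, (w₂ x t ⬝ᵥ gq₂ x t + q₂ x t * divOf (Jw₂ x t))) = 0
  H2₁ : ∀ t ∈ Icc (0:ℝ) T,
    (∫ x in Ω, (dw₁ x t ⬝ᵥ gq₁ x t + q₁ x t * divOf (Jdw₁ x t))) = 0
  H2₂ : ∀ t ∈ Icc (0:ℝ) T,
    (∫ x in Ω, (dw₂ x t ⬝ᵥ gq₂ x t + q₂ x t * divOf (Jdw₂ x t))) = 0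
  -- differentiation in `t` under the integral over `Ω` is valid
  leibniz : ∀ F F' : (Fin 3 → ℝ) → ℝ → ℝ,
    (∀ x ∈ Ω, ∀ t ∈ Icc (0:ℝ) T, HasDerivWithinAt (F x) (F' x t) (Icc (0:ℝ) T) t) →
    ContinuousOn (fun p : (Fin 3 → ℝ) × ℝ => F p.1 p.2) (Ω ×ˢ Icc (0:ℝ) T) →
    ContinuousOn (fun p : (Fin 3 → ℝ) × ℝ => F' p.1 p.2) (Ω ×ˢ Icc (0:ℝ) T) →
    (∃ C : ℝ, ∀ x ∈ Ω, ∀ t ∈ Icc (0:ℝ) T, |F x t| ≤ C) →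
    (∃ C : ℝ, ∀ x ∈ Ω, ∀ t ∈ Icc (0:ℝ) T, |F' x t| ≤ C) →
    ∀ t ∈ Icc (0:ℝ) T,
      HasDerivWithinAt (fun s => ∫ x in Ω, F x s) (∫ x in Ω, F' x t) (Icc (0:ℝ) T) t

/-- The (kinetic) energy `E(t) = ∫_Ω [ γ/(2φ₁) |w₁|² + γ/(2φ₂) |w₂|² ] dx` of the
difference system. -/
noncomputable def DPP.E (S : DPP) : ℝ → ℝ := fun t =>
  ∫ x in S.Ω, ((S.γ / (2 * S.φ₁ x)) * (S.w₁ x t ⬝ᵥ S.w₁ x t)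
    + (S.γ / (2 * S.φ₂ x)) * (S.w₂ x t ⬝ᵥ S.w₂ x t))

namespace DPPaux

lemma mulB {a b A B : ℝ} (ha : |a| ≤ A) (hb : |b| ≤ B) : |a * b| ≤ A * B := by
  rw [abs_mul]; exact mul_le_mul ha hb (abs_nonneg _) ((abs_nonneg a).trans ha)

lemma dotB {v w : Fin 3 → ℝ} {C D : ℝ} (hv : ∀ i, |v i| ≤ C) (hw : ∀ i, |w i| ≤ D) :
    |v ⬝ᵥ w| ≤ 3 * (C * D) := by
  calc |v ⬝ᵥ w| ≤ ∑ i, |v i * w i| := Finset.abs_sum_le_sum_abs _ _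
    _ ≤ ∑ _i : Fin 3, C * D := Finset.sum_le_sum fun i _ => mulB (hv i) (hw i)
    _ = 3 * (C * D) := by simp [Finset.sum_const]

lemma compB {v : Fin 3 → ℝ} {C : ℝ} (hv : ‖v‖ ≤ C) (i : Fin 3) : |v i| ≤ C :=
  le_trans (by simpa [Real.norm_eq_abs] using norm_le_pi_norm v i) hv

lemma intB {Ω : Set (Fin 3 → ℝ)} (hΩ : IsOpen Ω) (hb : Bornology.IsBounded Ω)
    {f : (Fin 3 → ℝ) → ℝ} (hf : ContinuousOn f Ω) {C : ℝ} (hC : ∀ x ∈ Ω, |f x| ≤ C) :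
    IntegrableOn f Ω := by
  haveI : IsFiniteMeasure (volume.restrict Ω) :=
    ⟨by rw [Measure.restrict_apply_univ]; exact hb.measure_lt_top⟩
  refine ⟨hf.aestronglyMeasurable hΩ.measurableSet, HasFiniteIntegral.of_bounded (C := C) ?_⟩
  filter_upwards [ae_restrict_mem hΩ.measurableSet] with x hx
  simpa [Real.norm_eq_abs] using hC x hx

lemma dotCont {X : Type*} [TopologicalSpace X] {s : Set X} {f g : X → Fin 3 → ℝ}
    (hf : ContinuousOn f s) (hg : ContinuousOn g s) :
    ContinuousOn (fun x => f x ⬝ᵥ g x) s := by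
  have : (fun x => f x ⬝ᵥ g x) = fun x => ∑ i, f x i * g x i := rfl
  rw [this]
  exact continuousOn_finset_sum _ fun i _ =>
    ((continuous_apply i).comp_continuousOn hf).mul ((continuous_apply i).comp_continuousOn hg)

lemma sliceCont {E : Type*} [TopologicalSpace E] {f : (Fin 3 → ℝ) → ℝ → E}
    {Ω : Set (Fin 3 → ℝ)} {I : Set ℝ}
    (hf : ContinuousOn (fun p : (Fin 3 → ℝ) × ℝ => f p.1 p.2) (Ω ×ˢ I)) {t : ℝ} (ht : t ∈ I) :
    ContinuousOn (fun x => f x t) Ω :=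
  hf.comp ((continuous_id.prodMk continuous_const).continuousOn) (fun x hx => ⟨hx, ht⟩)

lemma hdot {T : ℝ} (w dw : ℝ → Fin 3 → ℝ) (τ : ℝ)
    (h : HasDerivWithinAt w (dw τ) (Icc 0 T) τ) :
    HasDerivWithinAt (fun s => w s ⬝ᵥ w s) (dw τ ⬝ᵥ w τ + w τ ⬝ᵥ dw τ) (Icc 0 T) τ := by
  have hc := hasDerivWithinAt_pi.mp h
  have hs := HasDerivWithinAt.fun_sum (u := Finset.univ)
    (fun i (_ : i ∈ Finset.univ) => (hc i).mul (hc i))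
  refine hs.congr_deriv ?_
  simp [dotProduct, Finset.sum_add_distrib]

end DPPaux

/-- **Dissipation identity inside the proof of Proposition 3.2**: for the homogeneous DPP
difference system, for every `t ∈ [0,T]`,
`E′(t) = −∫_Ω μ (K₁⁻¹ w₁)·w₁ dx − ∫_Ω μ (K₂⁻¹ w₂)·w₂ dx − ∫_Ω (β/μ)(q₁ − q₂)² dx`. -/
theorem stmt_2 (S : DPP) :
    ∀ t ∈ Icc (0:ℝ) S.T,
      derivWithin S.E (Icc (0:ℝ) S.T) t =
        -(∫ x in S.Ω, S.μ * (((S.K₁ x)⁻¹ *ᵥ S.w₁ x t) ⬝ᵥ S.w₁ x t))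
          - (∫ x in S.Ω, S.μ * (((S.K₂ x)⁻¹ *ᵥ S.w₂ x t) ⬝ᵥ S.w₂ x t))
          - (∫ x in S.Ω, (S.β / S.μ) * (S.q₁ x t - S.q₂ x t) ^ 2) := by
  intro t ht
  obtain ⟨c₁, hc₁, C1φ, hφ₁⟩ := S.hφ₁bdd
  obtain ⟨c₂, hc₂, C2φ, hφ₂⟩ := S.hφ₂bdd
  obtain ⟨Cw₁, hCw₁⟩ := S.hw₁bdd
  obtain ⟨Cw₂, hCw₂⟩ := S.hw₂bdd
  obtain ⟨Cd₁, hCd₁⟩ := S.hdw₁bdd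
  obtain ⟨Cd₂, hCd₂⟩ := S.hdw₂bdd
  obtain ⟨Cg₁, hCg₁⟩ := S.hgq₁bdd
  obtain ⟨Cg₂, hCg₂⟩ := S.hgq₂bdd
  obtain ⟨Cq₁, hCq₁⟩ := S.hq₁bdd
  obtain ⟨Cq₂, hCq₂⟩ := S.hq₂bdd
  obtain ⟨CD₁, hCD₁⟩ := S.hdivw₁bdd
  obtain ⟨CD₂, hCD₂⟩ := S.hdivw₂bdd
  obtain ⟨CK₁, hCK₁⟩ := S.hK₁invbdd
  obtain ⟨CK₂, hCK₂⟩ := S.hK₂invbdd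
  have hMS := S.hΩopen.measurableSet
  -- slice continuity at time t
  have cw₁ : ContinuousOn (fun x => S.w₁ x t) S.Ω := DPPaux.sliceCont S.hw₁cont ht
  have cw₂ : ContinuousOn (fun x => S.w₂ x t) S.Ω := DPPaux.sliceCont S.hw₂cont ht
  have cg₁ : ContinuousOn (fun x => S.gq₁ x t) S.Ω := DPPaux.sliceCont S.hgq₁cont ht
  have cg₂ : ContinuousOn (fun x => S.gq₂ x t) S.Ω := DPPaux.sliceCont S.hgq₂cont ht
  have cq₁ : ContinuousOn (fun x => S.q₁ x t) S.Ω := DPPaux.sliceCont S.hq₁cont ht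
  have cq₂ : ContinuousOn (fun x => S.q₂ x t) S.Ω := DPPaux.sliceCont S.hq₂cont ht
  have cD₁ : ContinuousOn (fun x => divOf (S.Jw₁ x t)) S.Ω :=
    DPPaux.sliceCont (f := fun x s => divOf (S.Jw₁ x s)) S.hdivw₁cont ht
  have cD₂ : ContinuousOn (fun x => divOf (S.Jw₂ x t)) S.Ω :=
    DPPaux.sliceCont (f := fun x s => divOf (S.Jw₂ x s)) S.hdivw₂cont ht
  have cKw₁ : ContinuousOn (fun x => (S.K₁ x)⁻¹ *ᵥ S.w₁ x t) S.Ω := by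
    apply continuousOn_pi.mpr
    intro i
    have h : (fun x => ((S.K₁ x)⁻¹ *ᵥ S.w₁ x t) i)
        = fun x => ∑ j, (S.K₁ x)⁻¹ i j * S.w₁ x t j := rfl
    rw [h]
    exact continuousOn_finset_sum _ fun j _ =>
      (S.hK₁invcont i j).mul ((continuous_apply j).comp_continuousOn cw₁)
  have cKw₂ : ContinuousOn (fun x => (S.K₂ x)⁻¹ *ᵥ S.w₂ x t) S.Ω := by
    apply continuousOn_pi.mpr
    intro i
    have h : (fun x => ((S.K₂ x)⁻¹ *ᵥ S.w₂ x t) i)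
        = fun x => ∑ j, (S.K₂ x)⁻¹ i j * S.w₂ x t j := rfl
    rw [h]
    exact continuousOn_finset_sum _ fun j _ =>
      (S.hK₂invcont i j).mul ((continuous_apply j).comp_continuousOn cw₂)
  -- integrability at time t
  have iA₁ : IntegrableOn (fun x => S.μ * (((S.K₁ x)⁻¹ *ᵥ S.w₁ x t) ⬝ᵥ S.w₁ x t)) S.Ω := by
    refine DPPaux.intB S.hΩopen S.hΩbdd (continuousOn_const.mul (DPPaux.dotCont cKw₁ cw₁))
      (C := |S.μ| * (3 * ((3 * (CK₁ * Cw₁)) * Cw₁))) ?_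
    intro x hx
    refine DPPaux.mulB le_rfl (DPPaux.dotB (fun i => ?_) (DPPaux.compB (hCw₁ x hx t ht)))
    exact DPPaux.dotB (fun j => hCK₁ x hx i j) (DPPaux.compB (hCw₁ x hx t ht))
  have iA₂ : IntegrableOn (fun x => S.μ * (((S.K₂ x)⁻¹ *ᵥ S.w₂ x t) ⬝ᵥ S.w₂ x t)) S.Ω := by
    refine DPPaux.intB S.hΩopen S.hΩbdd (continuousOn_const.mul (DPPaux.dotCont cKw₂ cw₂))
      (C := |S.μ| * (3 * ((3 * (CK₂ * Cw₂)) * Cw₂))) ?_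
    intro x hx
    refine DPPaux.mulB le_rfl (DPPaux.dotB (fun i => ?_) (DPPaux.compB (hCw₂ x hx t ht)))
    exact DPPaux.dotB (fun j => hCK₂ x hx i j) (DPPaux.compB (hCw₂ x hx t ht))
  have iG₁ : IntegrableOn (fun x => S.w₁ x t ⬝ᵥ S.gq₁ x t) S.Ω :=
    DPPaux.intB S.hΩopen S.hΩbdd (DPPaux.dotCont cw₁ cg₁) (C := 3 * (Cw₁ * Cg₁))
      (fun x hx => DPPaux.dotB (DPPaux.compB (hCw₁ x hx t ht)) (DPPaux.compB (hCg₁ x hx t ht)))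
  have iG₂ : IntegrableOn (fun x => S.w₂ x t ⬝ᵥ S.gq₂ x t) S.Ω :=
    DPPaux.intB S.hΩopen S.hΩbdd (DPPaux.dotCont cw₂ cg₂) (C := 3 * (Cw₂ * Cg₂))
      (fun x hx => DPPaux.dotB (DPPaux.compB (hCw₂ x hx t ht)) (DPPaux.compB (hCg₂ x hx t ht)))
  have iP₁ : IntegrableOn (fun x => S.q₁ x t * divOf (S.Jw₁ x t)) S.Ω :=
    DPPaux.intB S.hΩopen S.hΩbdd (cq₁.mul cD₁) (C := Cq₁ * CD₁)
      (fun x hx => DPPaux.mulB (hCq₁ x hx t ht) (hCD₁ x hx t ht))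
  have iP₂ : IntegrableOn (fun x => S.q₂ x t * divOf (S.Jw₂ x t)) S.Ω :=
    DPPaux.intB S.hΩopen S.hΩbdd (cq₂.mul cD₂) (C := Cq₂ * CD₂)
      (fun x hx => DPPaux.mulB (hCq₂ x hx t ht) (hCD₂ x hx t ht))
  -- bounds for the coefficients γ/(2φ)
  have bφ1 : ∀ x ∈ S.Ω, |S.γ / (2 * S.φ₁ x)| ≤ S.γ / (2 * c₁) := by
    intro x hx
    have h1 := (hφ₁ x hx).1
    have hφx := S.hφ₁pos x hx
    rw [abs_of_nonneg (div_nonneg S.hγ.le (by linarith))]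
    gcongr
    exact S.hγ.le
  have bφ2 : ∀ x ∈ S.Ω, |S.γ / (2 * S.φ₂ x)| ≤ S.γ / (2 * c₂) := by
    intro x hx
    have h1 := (hφ₂ x hx).1
    have hφx := S.hφ₂pos x hx
    rw [abs_of_nonneg (div_nonneg S.hγ.le (by linarith))]
    gcongr
    exact S.hγ.le
  -- continuity of F and F' on the product set
  have cφ1' : ContinuousOn (fun p : (Fin 3 → ℝ) × ℝ => S.φ₁ p.1) (S.Ω ×ˢ Icc (0:ℝ) S.T) :=
    S.hφ₁cont.comp continuousOn_fst fun p hp => hp.1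
  have cφ2' : ContinuousOn (fun p : (Fin 3 → ℝ) × ℝ => S.φ₂ p.1) (S.Ω ×ˢ Icc (0:ℝ) S.T) :=
    S.hφ₂cont.comp continuousOn_fst fun p hp => hp.1
  have cφ1 : ContinuousOn (fun p : (Fin 3 → ℝ) × ℝ => S.γ / (2 * S.φ₁ p.1))
      (S.Ω ×ˢ Icc (0:ℝ) S.T) := by
    apply continuousOn_const.div (continuousOn_const.mul cφ1')
    intro p hp
    have := S.hφ₁pos p.1 hp.1
    exact ne_of_gt (by show (0:ℝ) < 2 * S.φ₁ p.1; linarith)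
  have cφ2 : ContinuousOn (fun p : (Fin 3 → ℝ) × ℝ => S.γ / (2 * S.φ₂ p.1))
      (S.Ω ×ˢ Icc (0:ℝ) S.T) := by
    apply continuousOn_const.div (continuousOn_const.mul cφ2')
    intro p hp
    have := S.hφ₂pos p.1 hp.1
    exact ne_of_gt (by show (0:ℝ) < 2 * S.φ₂ p.1; linarith)
  have hcF : ContinuousOn (fun p : (Fin 3 → ℝ) × ℝ =>
      S.γ / (2 * S.φ₁ p.1) * (S.w₁ p.1 p.2 ⬝ᵥ S.w₁ p.1 p.2)
        + S.γ / (2 * S.φ₂ p.1) * (S.w₂ p.1 p.2 ⬝ᵥ S.w₂ p.1 p.2)) (S.Ω ×ˢ Icc (0:ℝ) S.T) :=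
    (cφ1.mul (DPPaux.dotCont S.hw₁cont S.hw₁cont)).add
      (cφ2.mul (DPPaux.dotCont S.hw₂cont S.hw₂cont))
  have hcF' : ContinuousOn (fun p : (Fin 3 → ℝ) × ℝ =>
      S.γ / (2 * S.φ₁ p.1) * (S.dw₁ p.1 p.2 ⬝ᵥ S.w₁ p.1 p.2 + S.w₁ p.1 p.2 ⬝ᵥ S.dw₁ p.1 p.2)
        + S.γ / (2 * S.φ₂ p.1) * (S.dw₂ p.1 p.2 ⬝ᵥ S.w₂ p.1 p.2 + S.w₂ p.1 p.2 ⬝ᵥ S.dw₂ p.1 p.2))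
      (S.Ω ×ˢ Icc (0:ℝ) S.T) :=
    (cφ1.mul ((DPPaux.dotCont S.hdw₁cont S.hw₁cont).add
        (DPPaux.dotCont S.hw₁cont S.hdw₁cont))).add
      (cφ2.mul ((DPPaux.dotCont S.hdw₂cont S.hw₂cont).add
        (DPPaux.dotCont S.hw₂cont S.hdw₂cont)))
  -- bounds for F and F'
  have bF : ∀ x ∈ S.Ω, ∀ τ ∈ Icc (0:ℝ) S.T,
      |S.γ / (2 * S.φ₁ x) * (S.w₁ x τ ⬝ᵥ S.w₁ x τ)
        + S.γ / (2 * S.φ₂ x) * (S.w₂ x τ ⬝ᵥ S.w₂ x τ)|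
      ≤ S.γ / (2 * c₁) * (3 * (Cw₁ * Cw₁)) + S.γ / (2 * c₂) * (3 * (Cw₂ * Cw₂)) := by
    intro x hx τ hτ
    refine (abs_add_le _ _).trans (add_le_add ?_ ?_)
    · exact DPPaux.mulB (bφ1 x hx)
        (DPPaux.dotB (DPPaux.compB (hCw₁ x hx τ hτ)) (DPPaux.compB (hCw₁ x hx τ hτ)))
    · exact DPPaux.mulB (bφ2 x hx)
        (DPPaux.dotB (DPPaux.compB (hCw₂ x hx τ hτ)) (DPPaux.compB (hCw₂ x hx τ hτ)))
  have bF' : ∀ x ∈ S.Ω, ∀ τ ∈ Icc (0:ℝ) S.T,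
      |S.γ / (2 * S.φ₁ x) * (S.dw₁ x τ ⬝ᵥ S.w₁ x τ + S.w₁ x τ ⬝ᵥ S.dw₁ x τ)
        + S.γ / (2 * S.φ₂ x) * (S.dw₂ x τ ⬝ᵥ S.w₂ x τ + S.w₂ x τ ⬝ᵥ S.dw₂ x τ)|
      ≤ S.γ / (2 * c₁) * (3 * (Cd₁ * Cw₁) + 3 * (Cw₁ * Cd₁))
        + S.γ / (2 * c₂) * (3 * (Cd₂ * Cw₂) + 3 * (Cw₂ * Cd₂)) := by
    intro x hx τ hτ
    refine (abs_add_le _ _).trans (add_le_add ?_ ?_)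
    · refine DPPaux.mulB (bφ1 x hx) ((abs_add_le _ _).trans (add_le_add ?_ ?_))
      · exact DPPaux.dotB (DPPaux.compB (hCd₁ x hx τ hτ)) (DPPaux.compB (hCw₁ x hx τ hτ))
      · exact DPPaux.dotB (DPPaux.compB (hCw₁ x hx τ hτ)) (DPPaux.compB (hCd₁ x hx τ hτ))
    · refine DPPaux.mulB (bφ2 x hx) ((abs_add_le _ _).trans (add_le_add ?_ ?_))
      · exact DPPaux.dotB (DPPaux.compB (hCd₂ x hx τ hτ)) (DPPaux.compB (hCw₂ x hx τ hτ))
      · exact DPPaux.dotB (DPPaux.compB (hCw₂ x hx τ hτ)) (DPPaux.compB (hCd₂ x hx τ hτ))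
  -- differentiate under the integral sign
  have hED := S.leibniz
    (fun x s => S.γ / (2 * S.φ₁ x) * (S.w₁ x s ⬝ᵥ S.w₁ x s)
        + S.γ / (2 * S.φ₂ x) * (S.w₂ x s ⬝ᵥ S.w₂ x s))
    (fun x s => S.γ / (2 * S.φ₁ x) * (S.dw₁ x s ⬝ᵥ S.w₁ x s + S.w₁ x s ⬝ᵥ S.dw₁ x s)
        + S.γ / (2 * S.φ₂ x) * (S.dw₂ x s ⬝ᵥ S.w₂ x s + S.w₂ x s ⬝ᵥ S.dw₂ x s))
    (fun x hx τ hτ =>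
      ((DPPaux.hdot _ _ τ (S.hdw₁ x hx τ hτ)).const_mul _).add
        ((DPPaux.hdot _ _ τ (S.hdw₂ x hx τ hτ)).const_mul _))
    hcF hcF' ⟨_, bF⟩ ⟨_, bF'⟩ t ht
  have hEt : derivWithin S.E (Icc (0:ℝ) S.T) t
      = ∫ x in S.Ω, (S.γ / (2 * S.φ₁ x) * (S.dw₁ x t ⬝ᵥ S.w₁ x t + S.w₁ x t ⬝ᵥ S.dw₁ x t)
          + S.γ / (2 * S.φ₂ x) * (S.dw₂ x t ⬝ᵥ S.w₂ x t + S.w₂ x t ⬝ᵥ S.dw₂ x t)) :=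
    HasDerivWithinAt.derivWithin hED (uniqueDiffOn_Icc S.hT t ht)
  -- pointwise identity from the PDE
  have hpt : EqOn
      (fun x => S.γ / (2 * S.φ₁ x) * (S.dw₁ x t ⬝ᵥ S.w₁ x t + S.w₁ x t ⬝ᵥ S.dw₁ x t)
        + S.γ / (2 * S.φ₂ x) * (S.dw₂ x t ⬝ᵥ S.w₂ x t + S.w₂ x t ⬝ᵥ S.dw₂ x t))
      (fun x => (-(S.μ * (((S.K₁ x)⁻¹ *ᵥ S.w₁ x t) ⬝ᵥ S.w₁ x t)) - S.w₁ x t ⬝ᵥ S.gq₁ x t)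
        + (-(S.μ * (((S.K₂ x)⁻¹ *ᵥ S.w₂ x t) ⬝ᵥ S.w₂ x t)) - S.w₂ x t ⬝ᵥ S.gq₂ x t)) S.Ω := by
    intro x hx
    have hφx₁ : S.φ₁ x ≠ 0 := ne_of_gt (S.hφ₁pos x hx)
    have hφx₂ : S.φ₂ x ≠ 0 := ne_of_gt (S.hφ₂pos x hx)
    have e₁ : S.γ / (2 * S.φ₁ x) * (S.dw₁ x t ⬝ᵥ S.w₁ x t + S.w₁ x t ⬝ᵥ S.dw₁ x t)
        = ((S.γ / S.φ₁ x) • S.dw₁ x t) ⬝ᵥ S.w₁ x t := by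
      rw [smul_dotProduct, smul_eq_mul, dotProduct_comm (S.w₁ x t) (S.dw₁ x t)]
      field_simp
      ring
    have e₂ : S.γ / (2 * S.φ₂ x) * (S.dw₂ x t ⬝ᵥ S.w₂ x t + S.w₂ x t ⬝ᵥ S.dw₂ x t)
        = ((S.γ / S.φ₂ x) • S.dw₂ x t) ⬝ᵥ S.w₂ x t := by
      rw [smul_dotProduct, smul_eq_mul, dotProduct_comm (S.w₂ x t) (S.dw₂ x t)]
      field_simp
      ring
    have p₁ : (S.γ / S.φ₁ x) • S.dw₁ x t
        = -(S.μ • ((S.K₁ x)⁻¹ *ᵥ S.w₁ x t)) - S.gq₁ x t := by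
      have h := S.pde₁ x hx t ht
      rw [eq_sub_iff_add_eq, eq_neg_iff_add_eq_zero, ← h]
      abel
    have p₂ : (S.γ / S.φ₂ x) • S.dw₂ x t
        = -(S.μ • ((S.K₂ x)⁻¹ *ᵥ S.w₂ x t)) - S.gq₂ x t := by
      have h := S.pde₂ x hx t ht
      rw [eq_sub_iff_add_eq, eq_neg_iff_add_eq_zero, ← h]
      abel
    show S.γ / (2 * S.φ₁ x) * (S.dw₁ x t ⬝ᵥ S.w₁ x t + S.w₁ x t ⬝ᵥ S.dw₁ x t)
        + S.γ / (2 * S.φ₂ x) * (S.dw₂ x t ⬝ᵥ S.w₂ x t + S.w₂ x t ⬝ᵥ S.dw₂ x t)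
      = (-(S.μ * (((S.K₁ x)⁻¹ *ᵥ S.w₁ x t) ⬝ᵥ S.w₁ x t)) - S.w₁ x t ⬝ᵥ S.gq₁ x t)
        + (-(S.μ * (((S.K₂ x)⁻¹ *ᵥ S.w₂ x t) ⬝ᵥ S.w₂ x t)) - S.w₂ x t ⬝ᵥ S.gq₂ x t)
    rw [e₁, e₂, p₁, p₂, sub_dotProduct, sub_dotProduct, neg_dotProduct, neg_dotProduct,
      smul_dotProduct, smul_eq_mul, smul_dotProduct, smul_eq_mul,
      dotProduct_comm (S.gq₁ x t) (S.w₁ x t), dotProduct_comm (S.gq₂ x t) (S.w₂ x t)]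
  -- split the integral
  have split : (∫ x in S.Ω,
        (S.γ / (2 * S.φ₁ x) * (S.dw₁ x t ⬝ᵥ S.w₁ x t + S.w₁ x t ⬝ᵥ S.dw₁ x t)
          + S.γ / (2 * S.φ₂ x) * (S.dw₂ x t ⬝ᵥ S.w₂ x t + S.w₂ x t ⬝ᵥ S.dw₂ x t)))
      = (-(∫ x in S.Ω, S.μ * (((S.K₁ x)⁻¹ *ᵥ S.w₁ x t) ⬝ᵥ S.w₁ x t))
            - ∫ x in S.Ω, S.w₁ x t ⬝ᵥ S.gq₁ x t)
        + (-(∫ x in S.Ω, S.μ * (((S.K₂ x)⁻¹ *ᵥ S.w₂ x t) ⬝ᵥ S.w₂ x t))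
            - ∫ x in S.Ω, S.w₂ x t ⬝ᵥ S.gq₂ x t) := by
    have iN₁ : IntegrableOn
        (fun x => -(S.μ * (((S.K₁ x)⁻¹ *ᵥ S.w₁ x t) ⬝ᵥ S.w₁ x t))) S.Ω := iA₁.neg
    have iN₂ : IntegrableOn
        (fun x => -(S.μ * (((S.K₂ x)⁻¹ *ᵥ S.w₂ x t) ⬝ᵥ S.w₂ x t))) S.Ω := iA₂.neg
    have iS₁ : IntegrableOn (fun x =>
        -(S.μ * (((S.K₁ x)⁻¹ *ᵥ S.w₁ x t) ⬝ᵥ S.w₁ x t)) - S.w₁ x t ⬝ᵥ S.gq₁ x t) S.Ω :=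
      iN₁.sub iG₁
    have iS₂ : IntegrableOn (fun x =>
        -(S.μ * (((S.K₂ x)⁻¹ *ᵥ S.w₂ x t) ⬝ᵥ S.w₂ x t)) - S.w₂ x t ⬝ᵥ S.gq₂ x t) S.Ω :=
      iN₂.sub iG₂
    rw [setIntegral_congr_fun hMS hpt, integral_add iS₁ iS₂,
      integral_sub iN₁ iG₁, integral_sub iN₂ iG₂, integral_neg, integral_neg]
  -- gradient terms via (H1) and the mass equations
  have hH₁ := S.H1₁ t ht
  have hH₂ := S.H1₂ t ht
  have add₁ : (∫ x in S.Ω, (S.w₁ x t ⬝ᵥ S.gq₁ x t + S.q₁ x t * divOf (S.Jw₁ x t)))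
      = (∫ x in S.Ω, S.w₁ x t ⬝ᵥ S.gq₁ x t)
        + ∫ x in S.Ω, S.q₁ x t * divOf (S.Jw₁ x t) := integral_add iG₁ iP₁
  have add₂ : (∫ x in S.Ω, (S.w₂ x t ⬝ᵥ S.gq₂ x t + S.q₂ x t * divOf (S.Jw₂ x t)))
      = (∫ x in S.Ω, S.w₂ x t ⬝ᵥ S.gq₂ x t)
        + ∫ x in S.Ω, S.q₂ x t * divOf (S.Jw₂ x t) := integral_add iG₂ iP₂
  have addP : (∫ x in S.Ω, (S.q₁ x t * divOf (S.Jw₁ x t) + S.q₂ x t * divOf (S.Jw₂ x t)))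
      = (∫ x in S.Ω, S.q₁ x t * divOf (S.Jw₁ x t))
        + ∫ x in S.Ω, S.q₂ x t * divOf (S.Jw₂ x t) := integral_add iP₁ iP₂
  have hPQ : (∫ x in S.Ω, (S.q₁ x t * divOf (S.Jw₁ x t) + S.q₂ x t * divOf (S.Jw₂ x t)))
      = -(∫ x in S.Ω, (S.β / S.μ) * (S.q₁ x t - S.q₂ x t) ^ 2) := by
    rw [← integral_neg]
    apply setIntegral_congr_fun hMS
    intro x hx
    show S.q₁ x t * divOf (S.Jw₁ x t) + S.q₂ x t * divOf (S.Jw₂ x t)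
      = -((S.β / S.μ) * (S.q₁ x t - S.q₂ x t) ^ 2)
    rw [S.mass₁ x hx t ht, S.mass₂ x hx t ht]
    ring
  rw [hEt, split]
  have hG : (∫ x in S.Ω, S.w₁ x t ⬝ᵥ S.gq₁ x t) + (∫ x in S.Ω, S.w₂ x t ⬝ᵥ S.gq₂ x t)
      = ∫ x in S.Ω, (S.β / S.μ) * (S.q₁ x t - S.q₂ x t) ^ 2 := by
    linarith [hH₁, hH₂, add₁, add₂, addP, hPQ]
  linarith [hG]
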